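/- arXiv:2002.08994 — 2 statements merged into one kernel-verified Lean document; each statement's English description precedes it below -/
import Mathlib

section
/- The function M_0(x) = e^x − √(πx)·erfi(√x) is decreasing and concave on [0, ∞). -/
open Real

noncomputable def erfi (x : ℝ) : ℝ := (2 / Real.sqrt π) * ∫ z in (0:ℝ)..x, Real.exp (z ^ 2)

noncomputable def M0 (u : ℝ) : ℝ := Real.exp u - Real.sqrt (π * u) * erfi (Real.sqrt u)

noncomputable def Ferfi (s : ℝ) : ℝ := ∫ z in (0:ℝ)..s, Real.exp (z ^ 2)

lemma cont_exp_sq : Continuous fun z : ℝ => Real.exp (z ^ 2) :=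
  Real.continuous_exp.comp (continuous_pow 2)

lemma hF (s : ℝ) : HasDerivAt Ferfi (Real.exp (s ^ 2)) s :=
  intervalIntegral.integral_hasDerivAt_right (cont_exp_sq.intervalIntegrable _ _)
    (cont_exp_sq.stronglyMeasurableAtFilter _ _) cont_exp_sq.continuousAt

lemma F_ge (s : ℝ) (hs : 0 ≤ s) : s ≤ Ferfi s := by
  have : ∫ z in (0:ℝ)..s, (1:ℝ) ≤ Ferfi s := by
    apply intervalIntegral.integral_mono_on hs (intervalIntegrable_const)
      (cont_exp_sq.intervalIntegrable _ _)
    intro x _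
    simpa using Real.one_le_exp (sq_nonneg x)
  simpa using this

lemma F_le (s : ℝ) (hs : 0 ≤ s) : Ferfi s ≤ s * Real.exp (s ^ 2) := by
  have : Ferfi s ≤ ∫ z in (0:ℝ)..s, Real.exp (s ^ 2) := by
    apply intervalIntegral.integral_mono_on hs (cont_exp_sq.intervalIntegrable _ _)
      intervalIntegrable_const
    intro x hx
    exact Real.exp_le_exp.2 (by nlinarith [hx.1, hx.2])
  simpa [mul_comm] using this

lemma M0_eq : M0 = fun u => Real.exp u - 2 * Real.sqrt u * Ferfi (Real.sqrt u) := by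
  funext u
  unfold M0 erfi Ferfi
  rcases le_or_gt 0 u with hu | hu
  · rw [Real.sqrt_mul Real.pi_pos.le]
    have hπ : Real.sqrt π ≠ 0 := ne_of_gt (Real.sqrt_pos.2 Real.pi_pos)
    field_simp
  · rw [Real.sqrt_eq_zero_of_nonpos (by nlinarith [Real.pi_pos] : π * u ≤ 0),
      Real.sqrt_eq_zero_of_nonpos hu.le]
    ring

noncomputable def M0' (u : ℝ) : ℝ := -(Ferfi (Real.sqrt u) / Real.sqrt u)

noncomputable def M0'' (u : ℝ) : ℝ :=
  Ferfi (Real.sqrt u) / (2 * u * Real.sqrt u) - Real.exp u / (2 * u)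

lemma hM0' {u : ℝ} (hu : 0 < u) : HasDerivAt M0 (M0' u) u := by
  have hs : Real.sqrt u ≠ 0 := ne_of_gt (Real.sqrt_pos.2 hu)
  have hsq : Real.sqrt u ^ 2 = u := Real.sq_sqrt hu.le
  have h1 : HasDerivAt Real.sqrt (1 / (2 * Real.sqrt u)) u := Real.hasDerivAt_sqrt hu.ne'
  have h2 : HasDerivAt (fun v => Ferfi (Real.sqrt v))
      (Real.exp u * (1 / (2 * Real.sqrt u))) u := by
    have := (hF (Real.sqrt u)).comp u h1
    rwa [hsq] at this
  have h3 : HasDerivAt (fun v => Real.exp v - 2 * Real.sqrt v * Ferfi (Real.sqrt v))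
      (Real.exp u - ((2 * (1 / (2 * Real.sqrt u))) * Ferfi (Real.sqrt u)
        + (2 * Real.sqrt u) * (Real.exp u * (1 / (2 * Real.sqrt u))))) u :=
    (Real.hasDerivAt_exp u).sub (((h1.const_mul 2).mul h2))
  rw [M0_eq]
  convert h3 using 1
  unfold M0'
  field_simp
  ring

lemma hM0'' {u : ℝ} (hu : 0 < u) : HasDerivAt M0' (M0'' u) u := by
  have hs : Real.sqrt u ≠ 0 := ne_of_gt (Real.sqrt_pos.2 hu)
  have hsq : Real.sqrt u ^ 2 = u := Real.sq_sqrt hu.le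
  have h1 : HasDerivAt Real.sqrt (1 / (2 * Real.sqrt u)) u := Real.hasDerivAt_sqrt hu.ne'
  have h2 : HasDerivAt (fun v => Ferfi (Real.sqrt v))
      (Real.exp u * (1 / (2 * Real.sqrt u))) u := by
    have := (hF (Real.sqrt u)).comp u h1
    rwa [hsq] at this
  have h4 : HasDerivAt (fun v => Ferfi (Real.sqrt v) / Real.sqrt v)
      ((Real.exp u * (1 / (2 * Real.sqrt u)) * Real.sqrt u -
        Ferfi (Real.sqrt u) * (1 / (2 * Real.sqrt u))) / (Real.sqrt u) ^ 2) u := h2.div h1 hs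
  have h5 : HasDerivAt M0' _ u := h4.neg
  convert h5 using 1
  unfold M0''
  rw [hsq]
  have hu' : u ≠ 0 := hu.ne'
  field_simp
  nlinarith [Real.sq_sqrt hu.le, Real.sqrt_pos.2 hu, Real.exp_pos u,
    mul_pos hu (Real.sqrt_pos.2 hu)]

lemma M0_continuous : Continuous M0 := by
  rw [M0_eq]
  have hFc : Continuous Ferfi := Differentiable.continuous (fun s => (hF s).differentiableAt)
  exact (Real.continuous_exp).sub
    ((continuous_const.mul Real.continuous_sqrt).mul (hFc.comp Real.continuous_sqrt))

theorem M0_strictAntiOn_concaveOn :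
    StrictAntiOn M0 (Set.Ici 0) ∧ ConcaveOn ℝ (Set.Ici 0) M0 := by
  have hint : interior (Set.Ici (0:ℝ)) = Set.Ioi 0 := interior_Ici
  constructor
  · apply strictAntiOn_of_deriv_neg (convex_Ici 0) M0_continuous.continuousOn
    intro x hx
    rw [hint] at hx
    have hx : (0:ℝ) < x := hx
    rw [(hM0' hx).deriv]
    have hs : 0 < Real.sqrt x := Real.sqrt_pos.2 hx
    have hFpos : 0 < Ferfi (Real.sqrt x) := lt_of_lt_of_le hs (F_ge _ hs.le)
    unfold M0'
    exact neg_lt_zero.2 (div_pos hFpos hs)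
  · apply concaveOn_of_hasDerivWithinAt2_nonpos (convex_Ici 0)
      M0_continuous.continuousOn (f' := M0') (f'' := M0'')
    · intro x hx
      rw [hint] at hx
      exact (hM0' hx).hasDerivWithinAt
    · intro x hx
      rw [hint] at hx
      exact (hM0'' hx).hasDerivWithinAt
    · intro x hx
      rw [hint] at hx
      have hx : (0:ℝ) < x := hx
      have hs : 0 < Real.sqrt x := Real.sqrt_pos.2 hx
      have hsq : Real.sqrt x ^ 2 = x := Real.sq_sqrt hx.le
      have hle : Ferfi (Real.sqrt x) ≤ Real.sqrt x * Real.exp x := by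
        have := F_le (Real.sqrt x) hs.le
        rwa [hsq] at this
      unfold M0''
      rw [div_sub_div _ _ (by positivity) (by positivity : (2:ℝ)*x ≠ 0), div_nonpos_iff]
      right
      constructor
      · nlinarith [Real.exp_pos x, mul_pos hx hs]
      · positivity
end

section
/- For any α > 0, the function p̃_α(t,x) = (1/2)(1 − erfi(x/√(2t))/erfi(α/√2)) defined on (0,∞) × ℝ satisfies the backward heat equation ∂_t p̃_α(t,x) + (1/2)∂_{xx} p̃_α(t,x) = 0, together with boundary conditions p̃_α(t,0) = 1/2 and p̃_α(t, α√t) = 0 for all t > 0. -/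
open Real

noncomputable def ptilde (α t x : ℝ) : ℝ :=
  (1 / 2) * (1 - erfi (x / Real.sqrt (2 * t)) / erfi (α / Real.sqrt 2))

lemma erfi_hasDerivAt (y : ℝ) :
    HasDerivAt erfi ((2 / Real.sqrt π) * Real.exp (y ^ 2)) y := by
  have hc : Continuous fun z : ℝ => Real.exp (z ^ 2) := by continuity
  have h := (hc.integral_hasStrictDerivAt 0 y).hasDerivAt
  exact h.const_mul _

lemma erfi_pos {y : ℝ} (hy : 0 < y) : 0 < erfi y := by
  have hc : Continuous fun z : ℝ => Real.exp (z ^ 2) := by continuity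
  have hint : 0 < ∫ z in (0:ℝ)..y, Real.exp (z ^ 2) :=
    intervalIntegral.intervalIntegral_pos_of_pos (hc.intervalIntegrable 0 y) (fun x => Real.exp_pos _) hy
  have h2 : 0 < 2 / Real.sqrt π := by positivity
  exact mul_pos h2 hint

theorem ptilde_backward_heat (α : ℝ) (hα : 0 < α) :
    (∀ t : ℝ, 0 < t → ∀ x : ℝ,
      deriv (fun s => ptilde α s x) t + (1 / 2) * deriv (deriv (fun y => ptilde α t y)) x = 0) ∧
    (∀ t : ℝ, 0 < t → ptilde α t 0 = 1 / 2) ∧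
    (∀ t : ℝ, 0 < t → ptilde α t (α * Real.sqrt t) = 0) := by
  have hC : (0:ℝ) < erfi (α / Real.sqrt 2) :=
    erfi_pos (by positivity)
  set C := erfi (α / Real.sqrt 2) with hC_def
  refine ⟨?_, ?_, ?_⟩
  · intro t ht x
    have h2t : (0:ℝ) < 2 * t := by linarith
    set s := Real.sqrt (2 * t) with hs_def
    have hs : 0 < s := Real.sqrt_pos.mpr h2t
    have hs2 : s ^ 2 = 2 * t := Real.sq_sqrt h2t.le
    -- time derivative
    have hsqrt : HasDerivAt (fun u : ℝ => Real.sqrt (2 * u)) (1 / (2 * s) * 2) t := by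
      have h1 : HasDerivAt (fun u : ℝ => 2 * u) 2 t := by
        simpa using (hasDerivAt_id t).const_mul 2
      exact (Real.hasDerivAt_sqrt (ne_of_gt h2t)).comp t h1
    have hinner : HasDerivAt (fun u : ℝ => x / Real.sqrt (2 * u))
        (x * (-(1 / (2 * s) * 2) / s ^ 2)) t := by
      have h := (hsqrt.inv (ne_of_gt hs)).const_mul x
      rw [hs_def]
      simpa only [div_eq_mul_inv, Pi.inv_apply, hs_def] using h
    have hT : HasDerivAt (fun u => ptilde α u x)
        ((1/2) * (-((2 / Real.sqrt π) * Real.exp ((x / s) ^ 2)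
          * (x * (-(1 / (2 * s) * 2) / s ^ 2)) / C))) t := by
      have h := (((erfi_hasDerivAt (x / s)).comp t hinner).div_const C).const_sub 1
      exact h.const_mul (1/2)
    -- space derivative (first)
    have hx1 : ∀ y : ℝ, HasDerivAt (fun y => ptilde α t y)
        ((1/2) * (-((2 / Real.sqrt π) * Real.exp ((y / s) ^ 2) * (1 / s) / C))) y := by
      intro y
      have hi : HasDerivAt (fun y : ℝ => y / s) (1 / s) y := by
        simpa using (hasDerivAt_id y).div_const s
      have h := (((erfi_hasDerivAt (y / s)).comp y hi).div_const C).const_sub 1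
      exact h.const_mul (1/2)
    have hderiv_eq : deriv (fun y => ptilde α t y)
        = fun y => (1/2) * (-((2 / Real.sqrt π) * Real.exp ((y / s) ^ 2) * (1 / s) / C)) :=
      funext fun y => (hx1 y).deriv
    -- space derivative (second)
    have hexp : HasDerivAt (fun y : ℝ => Real.exp ((y / s) ^ 2))
        (Real.exp ((x / s) ^ 2) * (2 * x / s ^ 2)) x := by
      have hp : HasDerivAt (fun y : ℝ => (y / s) ^ 2) (2 * x / s ^ 2) x := by
        have hi : HasDerivAt (fun y : ℝ => y / s) (1 / s) x := by
          simpa using (hasDerivAt_id x).div_const s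
        have h := hi.pow 2
        have he : ((2:ℕ):ℝ) * (x / s) ^ (2 - 1) * (1 / s) = 2 * x / s ^ 2 := by
          push_cast
          field_simp
        rwa [he] at h
      simpa [mul_comm] using hp.exp
    have hx2 : HasDerivAt
        (fun y => (1/2) * (-((2 / Real.sqrt π) * Real.exp ((y / s) ^ 2) * (1 / s) / C)))
        ((1/2) * (-((2 / Real.sqrt π) * (Real.exp ((x / s) ^ 2) * (2 * x / s ^ 2)) * (1 / s) / C))) x := by
      have h1 : HasDerivAt (fun y : ℝ => (2 / Real.sqrt π) * Real.exp ((y / s) ^ 2) * (1 / s) / C)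
          ((2 / Real.sqrt π) * (Real.exp ((x / s) ^ 2) * (2 * x / s ^ 2)) * (1 / s) / C) x := by
        exact (((hexp.const_mul (2 / Real.sqrt π)).mul_const (1 / s)).div_const C)
      exact (h1.neg).const_mul (1/2)
    rw [hT.deriv, hderiv_eq, hx2.deriv]
    have hπ : Real.sqrt π ≠ 0 := by positivity
    field_simp
    ring
  · intro t ht
    simp [ptilde, erfi]
  · intro t ht
    have h2t : (0:ℝ) < 2 * t := by linarith
    have hsqrt : Real.sqrt (2 * t) = Real.sqrt 2 * Real.sqrt t :=
      Real.sqrt_mul (by norm_num) t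
    have hst : Real.sqrt t ≠ 0 := by positivity
    have h2 : Real.sqrt 2 ≠ 0 := by positivity
    have harg : α * Real.sqrt t / Real.sqrt (2 * t) = α / Real.sqrt 2 := by
      rw [hsqrt]; field_simp
    rw [ptilde, harg, div_self (ne_of_gt hC)]
    ring
end
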